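/- Let n be an even natural number with 4 ≤ n and suppose n ≡ 2 (mod 4). If 0 < η ≤ κ are real numbers, then the Wiener index of the saturated fuzzy cycle satisfies WI(n,κ,η) = (n(n^2 − 4)/16)·κ + (n(n^2 + 4)/16)·η. -/
import Mathlib


/-- Edge weight: the edge from `i` to `i+1` has weight `κ` if `i.val` is even,
and `η` if `i.val` is odd. -/
noncomputable def w (n : ℕ) (κ η : ℝ) (i : ZMod n) : ℝ :=
  if Even i.val then κ else η

/-- Forward arc weight: `A u k = Σ_{j=0}^{k-1} w (u + j)`. -/
noncomputable def A (n : ℕ) (κ η : ℝ) (u : ZMod n) (k : ℕ) : ℝ :=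
  ∑ j ∈ Finset.range k, w n κ η (u + (j : ZMod n))

/-- Cycle distance: `min (m, n - m)` where `v = u + m`, `0 ≤ m < n`. -/
def cdist (n : ℕ) (u v : ZMod n) : ℕ :=
  min (v - u).val (n - (v - u).val)

/-- Geodesic weight between `u` and `v`. -/
noncomputable def ds (n : ℕ) (κ η : ℝ) (u v : ZMod n) : ℝ :=
  if u = v then 0
  else if cdist n u v < n / 2 then
    (if v = u + (cdist n u v : ZMod n) then A n κ η u (cdist n u v)
     else A n κ η v (cdist n u v))
  else min (A n κ η u (n / 2)) (A n κ η v (n / 2))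

/-- Wiener index: sum of `ds` over unordered pairs of distinct vertices. -/
noncomputable def WI (n : ℕ) [NeZero n] (κ η : ℝ) : ℝ :=
  (1 / 2) * ∑ u : ZMod n, ∑ v : ZMod n, ds n κ η u v


section Aux
variable {n : ℕ} [NeZero n] (κ η : ℝ)

lemma sum_univ_zmod (f : ZMod n → ℝ) :
    ∑ u : ZMod n, f u = ∑ m ∈ Finset.range n, f (m : ZMod n) := by
  refine Finset.sum_nbij' (fun u => u.val) (fun m => (m : ZMod n))
    (fun a _ => Finset.mem_range.mpr (ZMod.val_lt a)) (fun a _ => Finset.mem_univ _)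
    (fun a _ => ZMod.natCast_zmod_val a)
    (fun a ha => ZMod.val_natCast_of_lt (Finset.mem_range.mp ha))
    (fun a _ => by rw [ZMod.natCast_zmod_val])

lemma sum_shift (f : ZMod n → ℝ) (c : ZMod n) :
    ∑ u : ZMod n, f (u + c) = ∑ u : ZMod n, f u :=
  Equiv.sum_comp (Equiv.addRight c) f

lemma val_add_parity (hn : 2 ∣ n) (u : ZMod n) (j : ℕ) :
    ((u + (j : ZMod n)).val) % 2 = (u.val + j) % 2 := by
  rw [ZMod.val_add, ZMod.val_natCast]
  have h1 : (u.val + j % n) % n % 2 = (u.val + j % n) % 2 := Nat.mod_mod_of_dvd _ hn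
  have h2 : j % n % 2 = j % 2 := Nat.mod_mod_of_dvd _ hn
  set k := j % n
  omega

lemma w_add (hn : 2 ∣ n) (u : ZMod n) (j : ℕ) :
    w n κ η (u + (j : ZMod n)) = if Even (u.val + j) then κ else η := by
  unfold w
  have := val_add_parity hn u j
  simp only [Nat.even_iff, this]

lemma strA (t : ℕ) : ∑ j ∈ Finset.range (2*t+1), (if Even j then κ else η)
    = ((t : ℝ) + 1) * κ + (t : ℝ) * η := by
  induction t with
  | zero => simp
  | succ t ih =>
    have h : 2*(t+1)+1 = (2*t+1) + 1 + 1 := by ring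
    rw [h, Finset.sum_range_succ, Finset.sum_range_succ, ih]
    have h1 : ¬ Even (2*t+1) := by simp [Nat.even_add_one, parity_simps]
    have h2 : Even (2*t+1+1) := by simp [Nat.even_add_one, parity_simps]
    rw [if_neg h1, if_pos h2]
    push_cast; ring

lemma strB (t : ℕ) : ∑ j ∈ Finset.range (2*t+1), (if Even j then η else κ)
    = (t : ℝ) * κ + ((t : ℝ) + 1) * η := by
  induction t with
  | zero => simp
  | succ t ih =>
    have h : 2*(t+1)+1 = (2*t+1) + 1 + 1 := by ring
    rw [h, Finset.sum_range_succ, Finset.sum_range_succ, ih]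
    have h1 : ¬ Even (2*t+1) := by simp [Nat.even_add_one, parity_simps]
    have h2 : Even (2*t+1+1) := by simp [Nat.even_add_one, parity_simps]
    rw [if_neg h1, if_pos h2]
    push_cast; ring

lemma A_parity (hn : 2 ∣ n) (u : ZMod n) (t : ℕ) :
    A n κ η u (2*t+1) =
      if Even u.val then ((t : ℝ) + 1) * κ + (t : ℝ) * η
      else (t : ℝ) * κ + ((t : ℝ) + 1) * η := by
  unfold A
  rw [Finset.sum_congr rfl (fun j _ => w_add κ η hn u j)]
  by_cases hu : Even u.val
  · rw [if_pos hu, ← strA κ η t]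
    refine Finset.sum_congr rfl fun j _ => ?_
    have : Even (u.val + j) ↔ Even j := by
      rw [Nat.even_add]; tauto
    simp only [this]
  · rw [if_neg hu, ← strB κ η t]
    refine Finset.sum_congr rfl fun j _ => ?_
    have : Even (u.val + j) ↔ ¬ Even j := by
      rw [Nat.even_add]; tauto
    by_cases hj : Even j
    · rw [if_neg (by simp [this, hj]), if_pos hj]
    · rw [if_pos (this.mpr hj), if_neg hj]

lemma sum_w_range (k : ℕ) :
    ∑ i ∈ Finset.range (2*k), (if Even i then κ else η) = (k : ℝ) * κ + (k : ℝ) * η := by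
  induction k with
  | zero => simp
  | succ k ih =>
    have h : 2*(k+1) = (2*k) + 1 + 1 := by ring
    rw [h, Finset.sum_range_succ, Finset.sum_range_succ, ih]
    have h1 : Even (2*k) := even_two_mul k
    have h2 : ¬ Even (2*k+1) := by simp [Nat.even_add_one, parity_simps]
    rw [if_pos h1, if_neg h2]
    push_cast; ring

lemma sum_w (hn : 2 ∣ n) :
    ∑ u : ZMod n, w n κ η u = ((n/2 : ℕ) : ℝ) * κ + ((n/2 : ℕ) : ℝ) * η := by
  rw [sum_univ_zmod]
  have h : ∀ m ∈ Finset.range n, w n κ η (m : ZMod n) = if Even m then κ else η := by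
    intro m hm
    unfold w
    rw [ZMod.val_natCast_of_lt (Finset.mem_range.mp hm)]
  rw [Finset.sum_congr rfl h]
  obtain ⟨k, hk⟩ := hn
  subst hk
  rw [show 2 * k / 2 = k by omega, sum_w_range]

lemma sum_A (k : ℕ) :
    ∑ u : ZMod n, A n κ η u k = (k : ℝ) * ∑ u : ZMod n, w n κ η u := by
  unfold A
  rw [Finset.sum_comm]
  have h : ∀ j ∈ Finset.range k, ∑ u : ZMod n, w n κ η (u + (j : ZMod n))
      = ∑ u : ZMod n, w n κ η u := fun j _ => sum_shift (w n κ η) _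
  rw [Finset.sum_congr rfl h, Finset.sum_const, nsmul_eq_mul, Finset.card_range]

lemma sum_min_range (h : ℕ) :
    ∑ m ∈ Finset.range (2*h), min m (2*h - m) = h * h := by
  have hsplit : Finset.range (2*h) = Finset.Ico 0 h ∪ Finset.Ico h (2*h) := by
    rw [Finset.range_eq_Ico, Finset.Ico_union_Ico_eq_Ico (by omega) (by omega)]
  rw [hsplit, Finset.sum_union (Finset.Ico_disjoint_Ico_consecutive 0 h (2*h))]
  rw [← Finset.range_eq_Ico]
  have e1 : ∑ m ∈ Finset.range h, min m (2*h - m) = ∑ m ∈ Finset.range h, m := by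
    refine Finset.sum_congr rfl fun m hm => ?_
    have := Finset.mem_range.mp hm; omega
  have e2 : ∑ m ∈ Finset.Ico h (2*h), min m (2*h - m)
      = ∑ i ∈ Finset.range h, (h - i) := by
    rw [Finset.sum_Ico_eq_sum_range]
    have hh : 2*h - h = h := by omega
    rw [hh]
    refine Finset.sum_congr rfl fun i hi => ?_
    have := Finset.mem_range.mp hi; omega
  rw [e1, e2, ← Finset.sum_add_distrib]
  have e3 : ∀ i ∈ Finset.range h, i + (h - i) = h := fun i hi => by
    have := Finset.mem_range.mp hi; omega
  rw [Finset.sum_congr rfl e3, Finset.sum_const, Finset.card_range, smul_eq_mul]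

end Aux

section Main
variable {n : ℕ} [NeZero n]

lemma row_eval (t : ℕ) (hn : n = 4*t+2) (κ η : ℝ) (hηκ : η ≤ κ) (c : ZMod n) :
    ∑ u : ZMod n, ds n κ η u (u + c) =
      if c.val = 2*t+1 then (n : ℝ) * ((t : ℝ) * κ + ((t : ℝ) + 1) * η)
      else ((min c.val (n - c.val) : ℕ) : ℝ) * ∑ u : ZMod n, w n κ η u := by
  have hn2 : 2 ∣ n := by omega
  have hcd : ∀ u : ZMod n, cdist n u (u + c) = min c.val (n - c.val) := by
    intro u; unfold cdist; rw [add_sub_cancel_left]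
  have hhalf : n / 2 = 2*t+1 := by omega
  have hmlt : c.val < n := ZMod.val_lt c
  by_cases h0 : c.val = 0
  · have hc : c = 0 := by rwa [← ZMod.val_eq_zero]
    rw [if_neg (by omega)]
    have hterm : ∀ u : ZMod n, ds n κ η u (u + c) = 0 := by
      intro u; rw [hc, add_zero]; simp [ds]
    rw [Finset.sum_congr rfl (fun u _ => hterm u), Finset.sum_const, smul_zero]
    rw [h0]
    simp
  · have hcne : c ≠ 0 := fun hc => h0 (by rw [hc, ZMod.val_zero])
    have hune : ∀ u : ZMod n, u ≠ u + c := by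
      intro u he
      exact hcne (left_eq_add.mp he)
    by_cases hhm : c.val = 2*t+1
    · rw [if_pos hhm]
      have hceq : c = ((2*t+1 : ℕ) : ZMod n) := by rw [← hhm, ZMod.natCast_zmod_val]
      have hterm : ∀ u : ZMod n, ds n κ η u (u + c)
          = (t : ℝ) * κ + ((t : ℝ) + 1) * η := by
        intro u
        unfold ds
        rw [if_neg (hune u), hcd u]
        have hmin : min c.val (n - c.val) = 2*t+1 := by omega
        rw [hmin, hhalf, if_neg (lt_irrefl _)]
        have hA1 := A_parity κ η hn2 u t
        have hA2 := A_parity κ η hn2 (u + c) t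
        have hpar : Even ((u + c).val) ↔ ¬ Even u.val := by
          have hv := val_add_parity hn2 u (2*t+1)
          rw [← hceq] at hv
          rw [Nat.even_iff, Nat.even_iff, hv]
          omega
        by_cases hu : Even u.val
        · rw [hA1, hA2, if_pos hu, if_neg (fun hx => (hpar.mp hx) hu)]
          exact min_eq_right (by nlinarith)
        · rw [hA1, hA2, if_neg hu, if_pos (hpar.mpr hu)]
          exact min_eq_left (by nlinarith)
      rw [Finset.sum_congr rfl (fun u _ => hterm u), Finset.sum_const]
      rw [Finset.card_univ, ZMod.card, nsmul_eq_mul]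
    · rw [if_neg hhm]
      by_cases hlt : c.val < 2*t+1
      · have hterm : ∀ u : ZMod n, ds n κ η u (u + c) = A n κ η u c.val := by
          intro u
          unfold ds
          rw [if_neg (hune u), hcd u]
          have hmin : min c.val (n - c.val) = c.val := by omega
          rw [hmin, hhalf, if_pos (by omega), if_pos (by rw [ZMod.natCast_zmod_val])]
        rw [Finset.sum_congr rfl (fun u _ => hterm u), sum_A]
        have hmin : min c.val (n - c.val) = c.val := by omega
        rw [hmin]
      · have hgt : 2*t+1 < c.val := by omega
        have hterm : ∀ u : ZMod n, ds n κ η u (u + c)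
            = A n κ η (u + c) (n - c.val) := by
          intro u
          unfold ds
          rw [if_neg (hune u), hcd u]
          have hmin : min c.val (n - c.val) = n - c.val := by omega
          have hne2 : u + c ≠ u + ((n - c.val : ℕ) : ZMod n) := by
            intro he
            have h1 : c = ((n - c.val : ℕ) : ZMod n) := add_left_cancel he
            have h2 : c.val = (((n - c.val : ℕ) : ZMod n)).val := by rw [← h1]
            rw [ZMod.val_natCast_of_lt (by omega)] at h2
            omega
          rw [hmin, hhalf, if_pos (by omega), if_neg hne2]
        rw [Finset.sum_congr rfl (fun u _ => hterm u)]
        rw [sum_shift (fun v => A n κ η v (n - c.val)) c, sum_A]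
        have hmin : min c.val (n - c.val) = n - c.val := by omega
        rw [hmin]

end Main

theorem wiener_index_saturated_cycle_two_mod_four
    (n : ℕ) [NeZero n] (hE : Even n) (h4 : 4 ≤ n) (hmod : n % 4 = 2)
    (κ η : ℝ) (hη : 0 < η) (hηκ : η ≤ κ) :
    WI n κ η = ((n : ℝ) * ((n : ℝ) ^ 2 - 4) / 16) * κ +
      ((n : ℝ) * ((n : ℝ) ^ 2 + 4) / 16) * η := by
  have hn : n = 4*(n/4)+2 := by omega
  set t := n/4 with ht
  have hn2 : 2 ∣ n := by omega
  unfold WI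
  have swap : (∑ u : ZMod n, ∑ v : ZMod n, ds n κ η u v)
      = ∑ c : ZMod n, ∑ u : ZMod n, ds n κ η u (u + c) := by
    calc ∑ u : ZMod n, ∑ v : ZMod n, ds n κ η u v
        = ∑ u : ZMod n, ∑ c : ZMod n, ds n κ η u (u + c) :=
          Finset.sum_congr rfl fun u _ =>
            (Fintype.sum_equiv (Equiv.addLeft u) (fun c => ds n κ η u (u + c))
              (fun v => ds n κ η u v) (fun c => rfl)).symm
      _ = ∑ c : ZMod n, ∑ u : ZMod n, ds n κ η u (u + c) := Finset.sum_comm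
  rw [swap, sum_univ_zmod (fun c => ∑ u : ZMod n, ds n κ η u (u + c))]
  have hrow : ∀ m ∈ Finset.range n, (∑ u : ZMod n, ds n κ η u (u + (m : ZMod n)))
      = if m = 2*t+1 then (n : ℝ) * ((t : ℝ) * κ + ((t : ℝ) + 1) * η)
        else ((min m (n - m) : ℕ) : ℝ) * ∑ u : ZMod n, w n κ η u := by
    intro m hm
    rw [row_eval t hn κ η hηκ, ZMod.val_natCast_of_lt (Finset.mem_range.mp hm)]
  rw [Finset.sum_congr rfl hrow]
  have hsplit : ∀ m ∈ Finset.range n,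
      (if m = 2*t+1 then (n : ℝ) * ((t : ℝ) * κ + ((t : ℝ) + 1) * η)
        else ((min m (n - m) : ℕ) : ℝ) * ∑ u : ZMod n, w n κ η u)
      = ((min m (n - m) : ℕ) : ℝ) * (∑ u : ZMod n, w n κ η u)
        + (if m = 2*t+1 then (n : ℝ) * ((t : ℝ) * κ + ((t : ℝ) + 1) * η)
            - ((2*t+1 : ℕ) : ℝ) * ∑ u : ZMod n, w n κ η u else 0) := by
    intro m _
    by_cases hmh : m = 2*t+1
    · rw [if_pos hmh, if_pos hmh, hmh]
      have hq : min (2*t+1) (n - (2*t+1)) = 2*t+1 := by omega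
      rw [hq]; ring
    · rw [if_neg hmh, if_neg hmh, add_zero]
  rw [Finset.sum_congr rfl hsplit, Finset.sum_add_distrib]
  rw [Finset.sum_ite_eq' (Finset.range n) (2*t+1)
    (fun _ => (n : ℝ) * ((t : ℝ) * κ + ((t : ℝ) + 1) * η)
      - ((2*t+1 : ℕ) : ℝ) * ∑ u : ZMod n, w n κ η u)]
  rw [if_pos (Finset.mem_range.mpr (by omega))]
  have hminsum : ∑ m ∈ Finset.range n, ((min m (n - m) : ℕ) : ℝ) * (∑ u : ZMod n, w n κ η u)
      = (((2*t+1)*(2*t+1) : ℕ) : ℝ) * ∑ u : ZMod n, w n κ η u := by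
    rw [← Finset.sum_mul, ← Nat.cast_sum]
    have hq : ∑ m ∈ Finset.range n, min m (n - m) = (2*t+1)*(2*t+1) := by
      rw [show n = 2*(2*t+1) by omega]
      exact sum_min_range (2*t+1)
    rw [hq]
  rw [hminsum, sum_w κ η hn2]
  have h2 : (n/2 : ℕ) = 2*t+1 := by omega
  rw [h2]
  have hnR : (n : ℝ) = 4*(t : ℝ)+2 := by rw [hn]; push_cast; ring
  rw [hnR]
  push_cast
  ring
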